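/- (Dedekind–Mertens for modules) Let A be a commutative ring, f ∈ A[T], E an A-module and g ∈ E[T] with m ≥ deg g. Then c(f)^{m+1}·c(g) = c(f)^m·c(fg), where c(g) denotes the submodule of E generated by the coefficients of g and c(f) the ideal of A generated by the coefficients of f. -/

import Mathlib

open Polynomial Submodule

section DM

variable {A : Type*} [CommRing A] {E : Type*} [AddCommGroup E] [Module A E]

private lemma dm_smul_comm (I J : Ideal A) (N : Submodule A E) :
    I • J • N = J • I • N := by
  rw [← Submodule.smul_assoc, ← Submodule.smul_assoc, Ideal.smul_eq_mul, Ideal.smul_eq_mul,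
    mul_comm]

private lemma dm_mul_smul (I J : Ideal A) (N : Submodule A E) :
    (I * J) • N = I • J • N := by
  rw [← Ideal.smul_eq_mul, Submodule.smul_assoc]

/-- Splitting of the `(i+n)`-th coefficient of `f • g` when `g` vanishes above `n`. -/
private lemma dm_coeff_split (f : Polynomial A) (g : PolynomialModule A E) (n : ℕ)
    (hg : ∀ k, n < k → g.coeff k = 0) (i : ℕ) :
    (f • g).coeff (i + n) = f.coeff i • g.coeff n +
      ∑ p ∈ (Finset.HasAntidiagonal.antidiagonal (i + n)).filter (fun p => i < p.1),
        f.coeff p.1 • g.coeff p.2 := by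
  rw [PolynomialModule.smul_apply, ← Finset.sum_filter_add_sum_filter_not _ (fun p => i < p.1),
    add_comm]
  congr 1
  refine Finset.sum_eq_single_of_mem (i, n) ?_ ?_
  · simp
  · rintro ⟨p1, p2⟩ hp hne
    obtain ⟨hmem, hle⟩ := Finset.mem_filter.mp hp
    have h1 : p1 + p2 = i + n := Finset.HasAntidiagonal.mem_antidiagonal.mp hmem
    have hle' : ¬ i < p1 := hle
    have h2 : n < p2 := by
      by_contra h
      push_neg at h
      exact hne (by simp only [Prod.mk.injEq]; omega)
    rw [hg p2 h2, smul_zero]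

private lemma dm_easy (f : Polynomial A) (g : PolynomialModule A E) (m : ℕ) :
    (Ideal.span (Set.range f.coeff)) ^ m • Submodule.span A (Set.range (f • g).coeff) ≤
      (Ideal.span (Set.range f.coeff)) ^ (m + 1) • Submodule.span A (Set.range g.coeff) := by
  have h1 : Submodule.span A (Set.range (f • g).coeff) ≤
      Ideal.span (Set.range f.coeff) • Submodule.span A (Set.range g.coeff) := by
    rw [Submodule.span_le]
    rintro x ⟨t, rfl⟩
    rw [PolynomialModule.smul_apply]
    exact Submodule.sum_mem _ fun p _ =>
      Submodule.smul_mem_smul (Ideal.subset_span ⟨p.1, rfl⟩) (Submodule.subset_span ⟨p.2, rfl⟩)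
  calc (Ideal.span (Set.range f.coeff)) ^ m • Submodule.span A (Set.range (f • g).coeff)
      ≤ (Ideal.span (Set.range f.coeff)) ^ m •
          (Ideal.span (Set.range f.coeff) • Submodule.span A (Set.range g.coeff)) :=
        smul_mono_right _ h1
    _ = (Ideal.span (Set.range f.coeff)) ^ (m + 1) • Submodule.span A (Set.range g.coeff) := by
        rw [← dm_mul_smul, ← pow_succ]

private lemma dm_hard (f : Polynomial A) :
    ∀ (m : ℕ) (g : PolynomialModule A E), (∀ k, m < k → g.coeff k = 0) →
      (Ideal.span (Set.range f.coeff)) ^ (m + 1) • Submodule.span A (Set.range g.coeff) ≤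
        (Ideal.span (Set.range f.coeff)) ^ m • Submodule.span A (Set.range (f • g).coeff) := by
  intro m
  induction m with
  | zero =>
    intro g hg
    simp only [zero_add, pow_one, pow_zero, Ideal.one_eq_top, Submodule.top_smul]
    have hG : Submodule.span A (Set.range g.coeff) ≤ Submodule.span A {g.coeff 0} := by
      rw [Submodule.span_le]
      rintro x ⟨k, rfl⟩
      match k with
      | 0 => exact Submodule.subset_span rfl
      | (k+1) =>
        rw [hg (k+1) (Nat.succ_pos k)]
        exact Submodule.zero_mem _
    refine le_trans (smul_mono_right _ hG) ?_
    rw [Submodule.span_smul_span, Submodule.span_le]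
    intro x hx
    simp only [Set.mem_smul, Set.mem_iUnion, Set.mem_singleton_iff, Set.mem_range] at hx
    obtain ⟨s, ⟨i, rfl⟩, t, rfl, rfl⟩ := hx
    have hsum : ∑ p ∈ (Finset.HasAntidiagonal.antidiagonal (i + 0)).filter (fun p => i < p.1),
        f.coeff p.1 • g.coeff p.2 = 0 := by
      refine Finset.sum_eq_zero ?_
      rintro ⟨p1, p2⟩ hp
      obtain ⟨hmem, hlt⟩ := Finset.mem_filter.mp hp
      have h1 : p1 + p2 = i + 0 := Finset.HasAntidiagonal.mem_antidiagonal.mp hmem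
      have hlt' : i < p1 := hlt
      exact absurd h1 (by omega)
    have hco : (f • g).coeff i = f.coeff i • g.coeff 0 := by
      have h := dm_coeff_split f g 0 (fun k hk => hg k hk) i
      rw [hsum, add_zero] at h
      simpa using h
    rw [← hco]
    exact Submodule.subset_span ⟨i, rfl⟩
  | succ m IH =>
    intro g hg
    set F := Ideal.span (Set.range f.coeff) with hF
    set b := g.coeff (m + 1) with hb
    set g₁ : PolynomialModule A E := g - PolynomialModule.single A (m + 1) b with hg₁def
    have happly : ∀ k, g₁.coeff k = g.coeff k - (PolynomialModule.single A (m + 1) b).coeff k := by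
      intro k
      exact Finsupp.sub_apply g.coeff (PolynomialModule.single A (m + 1) b).coeff k
    have hg₁ne : ∀ k, k ≠ m + 1 → g₁.coeff k = g.coeff k := by
      intro k h
      rw [happly, PolynomialModule.coeff_single, Finsupp.single_apply, if_neg (fun hh => h hh.symm), sub_zero]
    have hg₁ : ∀ k, m < k → g₁.coeff k = 0 := by
      intro k hk
      rcases eq_or_ne k (m + 1) with h | h
      · subst h
        rw [happly, PolynomialModule.coeff_single, Finsupp.single_apply, if_pos rfl]
        exact sub_self _
      · rw [hg₁ne k h]
        exact hg k (by omega)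
    set G₁ := Submodule.span A (Set.range g₁.coeff) with hG₁
    set C := Submodule.span A (Set.range (f • g).coeff) with hC
    set C₁ := Submodule.span A (Set.range (f • g₁).coeff) with hC₁
    set B := Submodule.span A ({b} : Set E) with hB
    set AgeI : ℕ → Ideal A := fun M => Ideal.span (f.coeff '' Set.Ici M) with hAge
    have hAgeLEF : ∀ M, AgeI M ≤ F := by
      intro M
      refine Ideal.span_le.mpr ?_
      rintro x ⟨iₓ, _, rfl⟩
      exact Ideal.subset_span ⟨iₓ, rfl⟩
    have hFle0 : F ≤ AgeI 0 := by
      refine Ideal.span_le.mpr ?_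
      rintro x ⟨iₓ, rfl⟩
      exact Ideal.subset_span ⟨iₓ, Set.mem_Ici.mpr (Nat.zero_le _), rfl⟩
    -- (S1)
    have hS1 : C₁ ≤ C ⊔ F • B := by
      rw [hC₁, Submodule.span_le]
      rintro x ⟨t, rfl⟩
      have hx : (f • g₁).coeff t = (f • g).coeff t - (f • PolynomialModule.single A (m + 1) b).coeff t := by
        rw [hg₁def, smul_sub]
        exact Finsupp.sub_apply _ _ t
      rw [hx]
      refine Submodule.sub_mem _
        (Submodule.mem_sup_left (Submodule.subset_span ⟨t, rfl⟩))
        (Submodule.mem_sup_right ?_)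
      rw [PolynomialModule.smul_apply]
      refine Submodule.sum_mem _ ?_
      rintro ⟨p1, p2⟩ _
      rw [PolynomialModule.coeff_single, Finsupp.single_apply]
      by_cases h : m + 1 = p2
      · rw [if_pos h]
        exact Submodule.smul_mem_smul (Ideal.subset_span ⟨p1, rfl⟩)
          (Submodule.subset_span rfl)
      · rw [if_neg h, smul_zero]
        exact Submodule.zero_mem _
    -- (S2)
    have hS2 : ∀ i, f.coeff i • b ∈ C ⊔ (AgeI (i + 1)) • G₁ := by
      intro i
      have hsplit := dm_coeff_split f g (m + 1) hg i
      have heq : f.coeff i • b = (f • g).coeff (i + (m + 1)) -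
          ∑ p ∈ (Finset.HasAntidiagonal.antidiagonal (i + (m + 1))).filter (fun p => i < p.1),
            f.coeff p.1 • g.coeff p.2 := by
        rw [hsplit, add_sub_cancel_right]
      rw [heq]
      refine Submodule.sub_mem _
        (Submodule.mem_sup_left (Submodule.subset_span ⟨i + (m + 1), rfl⟩))
        (Submodule.mem_sup_right (Submodule.sum_mem _ ?_))
      rintro ⟨p1, p2⟩ hp
      obtain ⟨hmem, hlt⟩ := Finset.mem_filter.mp hp
      have h1 : p1 + p2 = i + (m + 1) := Finset.HasAntidiagonal.mem_antidiagonal.mp hmem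
      have hlt' : i < p1 := hlt
      have hne : p2 ≠ m + 1 := by omega
      have hgg : g.coeff p2 = g₁.coeff p2 := (hg₁ne p2 hne).symm
      show f.coeff p1 • g.coeff p2 ∈ AgeI (i + 1) • G₁
      rw [hgg]
      exact Submodule.smul_mem_smul
        (Ideal.subset_span ⟨p1, Set.mem_Ici.mpr (by omega), rfl⟩)
        (Submodule.subset_span ⟨p2, rfl⟩)
    -- descending induction
    have hT : ∀ j M, f.natDegree + 1 ≤ M + j →
        AgeI M • (F ^ (m + 1) • B) ≤ F ^ (m + 1) • C := by
      intro j
      induction j with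
      | zero =>
        intro M hM
        have hbot : AgeI M = ⊥ := by
          refine Ideal.span_eq_bot.mpr ?_
          rintro x ⟨iₓ, hi, rfl⟩
          exact Polynomial.coeff_eq_zero_of_natDegree_lt
            (lt_of_lt_of_le (by omega) (Set.mem_Ici.mp hi))
        rw [hbot, Submodule.bot_smul]
        exact bot_le
      | succ j ihj =>
        intro M hM
        have hTM1 : AgeI (M + 1) • (F ^ (m + 1) • B) ≤ F ^ (m + 1) • C :=
          ihj (M + 1) (by omega)
        have step1 : AgeI M • B ≤ C ⊔ AgeI (M + 1) • G₁ := by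
          rw [hAge, hB, Submodule.span_smul_span, Submodule.span_le]
          intro x hx
          simp only [Set.mem_smul, Set.mem_iUnion, Set.mem_singleton_iff, Set.mem_image, Set.mem_Ici] at hx
          obtain ⟨s, ⟨iₓ, hiₓ, rfl⟩, t, rfl, rfl⟩ := hx
          have hmono : AgeI (iₓ + 1) • G₁ ≤ AgeI (M + 1) • G₁ :=
            Submodule.smul_mono_left
              (Ideal.span_mono (Set.image_mono (Set.Ici_subset_Ici.mpr (by omega))))
          exact (sup_le_sup_left hmono C) (hS2 iₓ)
        have step2 : F ^ (m + 1) • (AgeI (M + 1) • G₁) ≤ F ^ (m + 1) • C := by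
          rw [dm_smul_comm]
          have h1 : F ^ (m + 1) • G₁ ≤ F ^ m • C₁ := IH g₁ hg₁
          refine le_trans (smul_mono_right _ h1) ?_
          refine le_trans (smul_mono_right _ (smul_mono_right _ hS1)) ?_
          rw [Submodule.smul_sup, Submodule.smul_sup]
          refine sup_le ?_ ?_
          · refine le_trans (Submodule.smul_mono_left (hAgeLEF (M + 1))) ?_
            rw [← dm_mul_smul, ← pow_succ']
          · have he : F ^ m • (F • B) = F ^ (m + 1) • B := by
              rw [← dm_mul_smul, ← pow_succ]
            rw [he]
            exact hTM1
        calc AgeI M • (F ^ (m + 1) • B)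
            = F ^ (m + 1) • (AgeI M • B) := dm_smul_comm _ _ _
          _ ≤ F ^ (m + 1) • (C ⊔ AgeI (M + 1) • G₁) := smul_mono_right _ step1
          _ = F ^ (m + 1) • C ⊔ F ^ (m + 1) • (AgeI (M + 1) • G₁) := Submodule.smul_sup _ _ _
          _ ≤ F ^ (m + 1) • C := sup_le le_rfl step2
    have hT0 : AgeI 0 • (F ^ (m + 1) • B) ≤ F ^ (m + 1) • C :=
      hT (f.natDegree + 1) 0 (by omega)
    -- assembly
    have hP1 : F ^ (m + 1 + 1) • B ≤ F ^ (m + 1) • C := by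
      have he : F ^ (m + 1 + 1) • B = F • (F ^ (m + 1) • B) := by
        rw [← dm_mul_smul, ← pow_succ']
      rw [he]
      exact le_trans (Submodule.smul_mono_left hFle0) hT0
    have hP2 : F ^ (m + 1 + 1) • G₁ ≤ F ^ (m + 1) • C := by
      have he : F ^ (m + 1 + 1) • G₁ = F • (F ^ (m + 1) • G₁) := by
        rw [← dm_mul_smul, ← pow_succ']
      rw [he]
      refine le_trans (smul_mono_right _ (IH g₁ hg₁)) ?_
      refine le_trans (smul_mono_right _ (smul_mono_right _ hS1)) ?_
      rw [Submodule.smul_sup, Submodule.smul_sup]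
      refine sup_le ?_ ?_
      · rw [← dm_mul_smul, ← pow_succ']
      · have he2 : F ^ m • (F • B) = F ^ (m + 1) • B := by
          rw [← dm_mul_smul, ← pow_succ]
        rw [he2, ← dm_mul_smul, ← pow_succ']
        exact hP1
    have hS4 : Submodule.span A (Set.range g.coeff) ≤ B ⊔ G₁ := by
      rw [Submodule.span_le]
      rintro x ⟨k, rfl⟩
      rcases eq_or_ne k (m + 1) with h | h
      · subst h
        exact Submodule.mem_sup_left (Submodule.subset_span rfl)
      · rw [← hg₁ne k h]
        exact Submodule.mem_sup_right (Submodule.subset_span ⟨k, rfl⟩)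
    calc F ^ (m + 1 + 1) • Submodule.span A (Set.range g.coeff)
        ≤ F ^ (m + 1 + 1) • (B ⊔ G₁) := smul_mono_right _ hS4
      _ = F ^ (m + 1 + 1) • B ⊔ F ^ (m + 1 + 1) • G₁ := Submodule.smul_sup _ _ _
      _ ≤ F ^ (m + 1) • C := sup_le hP1 hP2

end DM

/-- Dedekind–Mertens for modules: for `f ∈ A[T]`, `g ∈ E[T]` with `deg g ≤ m`,
`c(f)^{m+1} · c(g) = c(f)^m · c(fg)`. -/
theorem stmt15 {A : Type*} [CommRing A] {E : Type*} [AddCommGroup E] [Module A E]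
    (f : Polynomial A) (g : PolynomialModule A E) (m : ℕ)
    (hdeg : ∀ k, m < k → g.coeff k = 0) :
    (Ideal.span (Set.range f.coeff)) ^ (m + 1) • Submodule.span A (Set.range g.coeff) =
      (Ideal.span (Set.range f.coeff)) ^ m • Submodule.span A (Set.range (f • g).coeff) := by
  exact le_antisymm (dm_hard f m g hdeg) (dm_easy f g m)
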